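/- arXiv:1805.08770 — 7 statements merged into one kernel-verified Lean document; each statement's English description precedes it below -/
import Mathlib

section
/- Let λ₁, λ₂ be dominant integral coweights such that λ₁ − λ₂ lies in the coroot lattice ℤΦ^∨. Then there exists a dominant integral coweight μ ∈ Λ⁺ with μ ≤ λ₁ and μ ≤ λ₂ such that (λ₁ − 𝖣) ∩ (λ₂ − 𝖣) = μ − 𝖣 inside Λ_ℚ. In particular 𝖯_{λ₁} ∩ 𝖯_{λ₂} = 𝖯_μ. (Paper's Lemma on intersections of dominant coweight polytopes, Lemma 3.20.) -/
/-!
Setting: a finite reduced crystallographic root system of rank `r`, given by simple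
coroots `coroot i = αᵢ^∨` in a `ℚ`-vector space `V` (playing the role of `Λ_ℚ`) together
with the pairing functionals `pairing i = ⟨αᵢ, ·⟩` against the simple roots, and a lattice
of coweights `Λ ⊆ V` containing the coroot lattice on which the simple roots take
integral values.
-/

/-- The cone `𝖣 ⊆ Λ_ℚ` of nonnegative rational combinations of the simple coroots. -/
def Dcone {V : Type*} [AddCommGroup V] [Module ℚ V] {r : ℕ} (coroot : Fin r → V) : Set V :=
  {ν | ∃ c : Fin r → ℚ, (∀ i, 0 ≤ c i) ∧ ν = ∑ i, c i • coroot i}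

/-- `μ ≤ lam` : `lam - μ` is a nonnegative *integral* combination of the simple coroots. -/
def leZ {V : Type*} [AddCommGroup V] [Module ℚ V] {r : ℕ} (coroot : Fin r → V)
    (μ lam : V) : Prop :=
  ∃ c : Fin r → ℕ, lam - μ = ∑ i, (c i : ℚ) • coroot i

/-- `μ ≤_ℚ lam` : `lam - μ ∈ 𝖣`. -/
def leQ {V : Type*} [AddCommGroup V] [Module ℚ V] {r : ℕ} (coroot : Fin r → V)
    (μ lam : V) : Prop :=
  lam - μ ∈ Dcone coroot

/-- A (rational) coweight is dominant if its pairing with every simple root is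
nonnegative. -/
def IsDominant {V : Type*} [AddCommGroup V] [Module ℚ V] {r : ℕ}
    (pairing : Fin r → V →ₗ[ℚ] ℚ) (ν : V) : Prop :=
  ∀ i, 0 ≤ pairing i ν

/-- The dominant coweight polytope `𝖯_lam = Λ_ℚ⁺ ∩ (lam − 𝖣)`. -/
def domPolytope {V : Type*} [AddCommGroup V] [Module ℚ V] {r : ℕ}
    (coroot : Fin r → V) (pairing : Fin r → V →ₗ[ℚ] ℚ) (lam : V) : Set V :=
  {ν | IsDominant pairing ν ∧ leQ coroot ν lam}

private lemma dom_aux {V : Type*} [AddCommGroup V] [Module ℚ V] {r : ℕ}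
    (coroot : Fin r → V) (pairing : Fin r → V →ₗ[ℚ] ℚ)
    (hoff : ∀ i j, i ≠ j → pairing i (coroot j) ≤ 0)
    (c : Fin r → ℚ) (hc : ∀ i, 0 ≤ c i) (j : Fin r) (hcj : c j = 0)
    (lam : V) (hlam : 0 ≤ pairing j lam) :
    0 ≤ pairing j (lam - ∑ i, c i • coroot i) := by
  rw [map_sub, map_sum]
  have hsum : ∑ i, pairing j (c i • coroot i) ≤ 0 := by
    apply Finset.sum_nonpos
    intro i _
    rw [LinearMap.map_smul, smul_eq_mul]
    rcases eq_or_ne j i with h | h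
    · subst h; rw [hcj]; simp
    · exact mul_nonpos_of_nonneg_of_nonpos (hc i) (hoff j i h)
  linarith

/-- Lemma 3.20: if `lam₁, lam₂ ∈ Λ⁺` and `lam₁ - lam₂` lies in the coroot lattice, then
there is `μ ∈ Λ⁺` with `μ ≤ lam₁`, `μ ≤ lam₂`,
`(lam₁ − 𝖣) ∩ (lam₂ − 𝖣) = μ − 𝖣`, and in particular `𝖯_{lam₁} ∩ 𝖯_{lam₂} = 𝖯_μ`. -/
theorem polytope_intersection
    {V : Type*} [AddCommGroup V] [Module ℚ V] {r : ℕ}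
    (coroot : Fin r → V) (pairing : Fin r → V →ₗ[ℚ] ℚ) (Λ : AddSubgroup V)
    (hli : LinearIndependent ℚ coroot)
    (hdiag : ∀ i, pairing i (coroot i) = 2)
    (hoff : ∀ i j, i ≠ j → pairing i (coroot j) ≤ 0)
    (hΛcoroot : ∀ i, coroot i ∈ Λ)
    (hΛint : ∀ μ ∈ Λ, ∀ i, ∃ n : ℤ, pairing i μ = (n : ℚ))
    (lam₁ lam₂ : V) (h₁Λ : lam₁ ∈ Λ) (h₂Λ : lam₂ ∈ Λ)
    (h₁dom : IsDominant pairing lam₁) (h₂dom : IsDominant pairing lam₂)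
    (hdiff : ∃ c : Fin r → ℤ, lam₁ - lam₂ = ∑ i, (c i : ℚ) • coroot i) :
    ∃ μ : V, μ ∈ Λ ∧ IsDominant pairing μ ∧ leZ coroot μ lam₁ ∧ leZ coroot μ lam₂ ∧
      {ν : V | lam₁ - ν ∈ Dcone coroot} ∩ {ν : V | lam₂ - ν ∈ Dcone coroot}
        = {ν : V | μ - ν ∈ Dcone coroot} ∧
      domPolytope coroot pairing lam₁ ∩ domPolytope coroot pairing lam₂
        = domPolytope coroot pairing μ := by
  obtain ⟨a, ha⟩ := hdiff
  set m : Fin r → ℤ := fun i => max (a i) 0 with hm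
  set μ : V := lam₁ - ∑ i, ((m i : ℚ)) • coroot i with hμ
  have hcast : ∀ (f : Fin r → ℤ) (g : Fin r → ℚ), (∀ i, (f i : ℚ) = g i) →
      ∑ i, (f i : ℚ) • coroot i = ∑ i, g i • coroot i := by
    intro f g h
    exact Finset.sum_congr rfl fun i _ => by rw [h i]
  -- second expression for μ
  have hμ₂ : μ = lam₂ - ∑ i, ((m i - a i : ℤ) : ℚ) • coroot i := by
    have hsum : ∑ i, ((m i - a i : ℤ) : ℚ) • coroot i
        = ∑ i, (m i : ℚ) • coroot i - ∑ i, (a i : ℚ) • coroot i := by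
      rw [← Finset.sum_sub_distrib]
      refine Finset.sum_congr rfl fun i _ => ?_
      push_cast
      rw [sub_smul]
    rw [hμ, hsum, ← ha]; abel
  -- uniqueness of coefficients
  have huniq : ∀ c d : Fin r → ℚ, ∑ i, c i • coroot i = ∑ i, d i • coroot i →
      ∀ i, c i = d i := by
    intro c d h i
    have h0 : ∑ j, (c j - d j) • coroot j = 0 := by
      rw [Finset.sum_congr rfl fun j _ => sub_smul (c j) (d j) (coroot j),
        Finset.sum_sub_distrib, h, sub_self]
    have := (Fintype.linearIndependent_iff.mp hli) (fun j => c j - d j) h0 i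
    linarith [this]
  have hcone : {ν : V | lam₁ - ν ∈ Dcone coroot} ∩ {ν : V | lam₂ - ν ∈ Dcone coroot}
      = {ν : V | μ - ν ∈ Dcone coroot} := by
    ext ν
    simp only [Set.mem_inter_iff, Set.mem_setOf_eq, Dcone]
    constructor
    · rintro ⟨⟨c, hc0, hc⟩, ⟨c', hc'0, hc'⟩⟩
      have hdiffc : ∀ i, c i - c' i = (a i : ℚ) := by
        apply huniq
        rw [Finset.sum_congr rfl fun i _ => sub_smul (c i) (c' i) (coroot i),
          Finset.sum_sub_distrib, ← hc, ← hc', ← ha]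
        abel
      refine ⟨fun i => c i - (m i : ℚ), fun i => ?_, ?_⟩
      · have h1 := hc0 i
        have h2 := hc'0 i
        have h3 := hdiffc i
        show (0:ℚ) ≤ c i - (m i : ℚ)
        have h4 : (m i : ℚ) = max ((a i : ℚ)) 0 := by
          simp only [hm]
          push_cast
          rfl
        rw [h4, le_sub_iff_add_le, zero_add]
        apply max_le <;> linarith
      · have : μ - ν = (lam₁ - ν) - ∑ i, (m i : ℚ) • coroot i := by rw [hμ]; abel
        rw [this, hc, Finset.sum_congr rfl fun i _ => sub_smul (c i) ((m i : ℚ)) (coroot i),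
          Finset.sum_sub_distrib]
    · rintro ⟨c, hc0, hc⟩
      constructor
      · refine ⟨fun i => c i + (m i : ℚ), fun i => ?_, ?_⟩
        · show (0:ℚ) ≤ c i + (m i : ℚ)
          have : (0 : ℚ) ≤ (m i : ℚ) := by
            exact_mod_cast le_max_right (a i) 0
          linarith [hc0 i]
        · have : lam₁ - ν = (μ - ν) + ∑ i, (m i : ℚ) • coroot i := by rw [hμ]; abel
          rw [this, hc, Finset.sum_congr rfl fun i _ => add_smul (c i) ((m i : ℚ)) (coroot i),
            Finset.sum_add_distrib]
      · refine ⟨fun i => c i + ((m i - a i : ℤ) : ℚ), fun i => ?_, ?_⟩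
        · show (0:ℚ) ≤ c i + ((m i - a i : ℤ) : ℚ)
          have : (0 : ℚ) ≤ ((m i - a i : ℤ) : ℚ) := by
            have h0 : (0:ℤ) ≤ m i - a i := sub_nonneg.mpr (le_max_left (a i) 0)
            exact_mod_cast h0
          linarith [hc0 i]
        · have : lam₂ - ν = (μ - ν) + ∑ i, ((m i - a i : ℤ) : ℚ) • coroot i := by
            rw [hμ₂]; abel
          rw [this, hc,
            Finset.sum_congr rfl fun i _ => add_smul (c i) (((m i - a i : ℤ) : ℚ)) (coroot i),
            Finset.sum_add_distrib]
  refine ⟨μ, ?_, ?_, ?_, ?_, hcone, ?_⟩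
  · -- μ ∈ Λ
    rw [hμ]
    refine AddSubgroup.sub_mem Λ h₁Λ ?_
    refine AddSubgroup.sum_mem Λ fun i _ => ?_
    have : ((m i : ℚ)) • coroot i = (m i : ℤ) • coroot i := by
      rw [Int.cast_smul_eq_zsmul]
    rw [this]
    exact AddSubgroup.zsmul_mem Λ (hΛcoroot i) _
  · -- dominance
    intro j
    rcases le_or_gt (a j) 0 with haj | haj
    · rw [hμ]
      refine dom_aux coroot pairing hoff (fun i => (m i : ℚ))
        (fun i => show (0:ℚ) ≤ ((m i : ℤ):ℚ) by exact_mod_cast le_max_right (a i) 0)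
        j ?_ lam₁ (h₁dom j)
      simp only [hm]
      rw [max_eq_right haj]; simp
    · rw [hμ₂]
      refine dom_aux coroot pairing hoff (fun i => ((m i - a i : ℤ) : ℚ))
        (fun i => show (0:ℚ) ≤ ((m i - a i : ℤ):ℚ) by
          exact_mod_cast sub_nonneg.mpr (le_max_left (a i) 0)) j ?_ lam₂ (h₂dom j)
      simp only [hm]
      rw [max_eq_left haj.le]; simp
  · -- leZ μ lam₁
    refine ⟨fun i => (a i).toNat, ?_⟩
    rw [hμ, sub_sub_cancel]
    refine Finset.sum_congr rfl fun i _ => ?_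
    have h5 : ((a i).toNat : ℤ) = m i := by simp only [hm]; omega
    rw [← h5]
    norm_cast
  · -- leZ μ lam₂
    refine ⟨fun i => (-a i).toNat, ?_⟩
    rw [hμ₂, sub_sub_cancel]
    refine Finset.sum_congr rfl fun i _ => ?_
    have h5 : (((-a i)).toNat : ℤ) = m i - a i := by simp only [hm]; omega
    rw [← h5]
    norm_cast
  · -- polytope intersection
    have h := Set.ext_iff.mp hcone
    ext ν
    have hν := h ν
    simp only [Set.mem_inter_iff, Set.mem_setOf_eq] at hν
    simp only [Set.mem_inter_iff, domPolytope, leQ, Set.mem_setOf_eq]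
    tauto
end

section
/- For λ₁, λ₂ ∈ Λ⁺ with λ₁ ≠ λ₂ and λ₁ − λ₂ in the coroot lattice ℤΦ^∨, the open strata are disjoint: 𝖯°_{λ₁} ∩ 𝖯°_{λ₂} = ∅. (Disjointness part of the paper's Corollary 3.21 on the stratification of the dominant rational coweight cone.) -/
/-- The open stratum `𝖯_lam° = 𝖯_lam \ ⋃_{μ ∈ Λ⁺, μ ≤ lam, μ ≠ lam} 𝖯_μ`. -/
def openStratum {V : Type*} [AddCommGroup V] [Module ℚ V] {r : ℕ}
    (coroot : Fin r → V) (pairing : Fin r → V →ₗ[ℚ] ℚ) (Λ : AddSubgroup V) (lam : V) :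
    Set V :=
  domPolytope coroot pairing lam \
    ⋃ μ ∈ {μ : V | μ ∈ Λ ∧ IsDominant pairing μ ∧ leZ coroot μ lam ∧ μ ≠ lam},
      domPolytope coroot pairing μ

/-- Corollary 3.21 (disjointness): for distinct `lam₁, lam₂ ∈ Λ⁺` whose difference lies in
the coroot lattice, the open strata are disjoint: `𝖯°_{lam₁} ∩ 𝖯°_{lam₂} = ∅`. -/
theorem open_strata_disjoint
    {V : Type*} [AddCommGroup V] [Module ℚ V] {r : ℕ}
    (coroot : Fin r → V) (pairing : Fin r → V →ₗ[ℚ] ℚ) (Λ : AddSubgroup V)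
    (hli : LinearIndependent ℚ coroot)
    (hdiag : ∀ i, pairing i (coroot i) = 2)
    (hoff : ∀ i j, i ≠ j → pairing i (coroot j) ≤ 0)
    (hΛcoroot : ∀ i, coroot i ∈ Λ)
    (hΛint : ∀ μ ∈ Λ, ∀ i, ∃ n : ℤ, pairing i μ = (n : ℚ))
    (lam₁ lam₂ : V) (h₁Λ : lam₁ ∈ Λ) (h₂Λ : lam₂ ∈ Λ)
    (h₁dom : IsDominant pairing lam₁) (h₂dom : IsDominant pairing lam₂)
    (hne : lam₁ ≠ lam₂)
    (hdiff : ∃ c : Fin r → ℤ, lam₁ - lam₂ = ∑ i, (c i : ℚ) • coroot i) :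
    openStratum coroot pairing Λ lam₁ ∩ openStratum coroot pairing Λ lam₂ = ∅ := by
  rw [Set.eq_empty_iff_forall_notMem]
  rintro ν ⟨⟨⟨hνdom, d, hd0, hd⟩, hnot1⟩, ⟨⟨-, e, he0, he⟩, hnot2⟩⟩
  obtain ⟨c, hc⟩ := hdiff
  -- coefficients agree: d i - e i = c i
  have hzero : ∑ i, (d i - e i - (c i : ℚ)) • coroot i = 0 := by
    simp only [sub_smul, Finset.sum_sub_distrib, ← hd, ← he, ← hc]
    abel
  have hdec : ∀ i, d i - e i = (c i : ℚ) := by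
    intro i
    have := Fintype.linearIndependent_iff.mp hli _ hzero i
    linarith
  set p : Fin r → ℕ := fun i => (c i).toNat with hp
  set q : Fin r → ℕ := fun i => (-(c i)).toNat with hq
  have hpq : ∀ i, (p i : ℚ) - (q i : ℚ) = (c i : ℚ) := by
    intro i
    have : (p i : ℤ) - (q i : ℤ) = c i := by simp only [hp, hq]; omega
    exact_mod_cast congrArg (Int.cast : ℤ → ℚ) this
  set μ : V := lam₁ - ∑ i, (p i : ℚ) • coroot i with hμ
  have hμ2 : μ = lam₂ - ∑ i, (q i : ℚ) • coroot i := by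
    rw [hμ, sub_eq_sub_iff_sub_eq_sub, hc]
    rw [← Finset.sum_sub_distrib]
    congr 1
    funext i
    rw [← sub_smul, hpq]
  -- μ ∈ Λ
  have hμΛ : μ ∈ Λ := by
    apply AddSubgroup.sub_mem _ h₁Λ
    apply AddSubgroup.sum_mem
    intro i _
    rw [Nat.cast_smul_eq_nsmul ℚ]
    exact AddSubgroup.nsmul_mem Λ (hΛcoroot i) (p i)
  -- μ is dominant
  have hμdom : IsDominant pairing μ := by
    intro j
    by_cases hcj : 0 ≤ c j
    · have hqj : q j = 0 := by simp [hq]; omega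
      rw [hμ2]
      simp only [map_sub, map_sum, map_smul, smul_eq_mul]
      have hsum : ∑ i, (q i : ℚ) * pairing j (coroot i) ≤ 0 := by
        apply Finset.sum_nonpos
        intro i _
        by_cases hij : i = j
        · simp [hij, hqj]
        · exact mul_nonpos_of_nonneg_of_nonpos (by positivity) (hoff j i (Ne.symm hij))
      have := h₂dom j
      linarith
    · have hpj : p j = 0 := by simp [hp]; omega
      rw [hμ]
      simp only [map_sub, map_sum, map_smul, smul_eq_mul]
      have hsum : ∑ i, (p i : ℚ) * pairing j (coroot i) ≤ 0 := by
        apply Finset.sum_nonpos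
        intro i _
        by_cases hij : i = j
        · simp [hij, hpj]
        · exact mul_nonpos_of_nonneg_of_nonpos (by positivity) (hoff j i (Ne.symm hij))
      have := h₁dom j
      linarith
  -- ν ≤_Q μ
  have hνμ : leQ coroot ν μ := by
    refine ⟨fun i => d i - p i, ?_, ?_⟩
    · intro i
      show (0:ℚ) ≤ d i - (p i : ℚ)
      by_cases hci : 0 ≤ c i
      · have : (p i : ℚ) = (c i : ℚ) := by
          have : (p i : ℤ) = c i := by simp [hp]; omega
          exact_mod_cast congrArg (Int.cast : ℤ → ℚ) this
        have := hdec i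
        have := he0 i
        linarith
      · have : p i = 0 := by simp only [hp]; omega
        rw [this]
        have := hd0 i
        push_cast
        linarith
    · rw [hμ]
      simp only [sub_smul, Finset.sum_sub_distrib, ← hd]
      abel
  -- μ ≤_Z lam₁ and lam₂
  have hle1 : leZ coroot μ lam₁ := ⟨p, by rw [hμ]; abel⟩
  have hle2 : leZ coroot μ lam₂ := ⟨q, by rw [hμ2]; abel⟩
  by_cases hμ1 : μ = lam₁
  · have hμ2ne : μ ≠ lam₂ := fun h => hne (hμ1 ▸ h ▸ rfl)
    exact hnot2 (Set.mem_biUnion ⟨hμΛ, hμdom, hle2, hμ2ne⟩ ⟨hνdom, hνμ⟩)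
  · exact hnot1 (Set.mem_biUnion ⟨hμΛ, hμdom, hle1, hμ1⟩ ⟨hνdom, hνμ⟩)
end

section
/- Fix λ₀ ∈ Λ. For every dominant rational coweight ν ∈ Λ_ℚ⁺ with ν − λ₀ in the ℚ-span ℚΦ^∨ of the coroots, there exists a unique λ ∈ Λ⁺ with λ − λ₀ ∈ ℤΦ^∨ and ν ∈ 𝖯_λ°. Consequently the sets 𝖯_λ° for λ ∈ Λ⁺ with λ ≡ λ₀ mod ℤΦ^∨ form a partition of Λ_ℚ⁺ ∩ (λ₀ + ℚΦ^∨). (Stratification part of the paper's Corollary 3.21.) -/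
lemma aux_exists_upper {r : ℕ} (A : Fin r → Fin r → ℚ) (p : Fin r → ℚ)
    (B : Fin r → Fin r → ℚ) (hB : ∀ i j, 0 ≤ B i j)
    (hAB : ∀ i k, (∑ l, A i l * B l k) = if i = k then 1 else 0)
    (q : Fin r → ℚ) :
    ∃ n : Fin r → ℤ, (∀ i, q i ≤ (n i : ℚ)) ∧ ∀ j, 0 ≤ p j + ∑ i, (n i : ℚ) * A j i := by
  set m : Fin r → ℤ := fun i => ⌈q i⌉ with hm
  set v : Fin r → ℚ := fun j => -(p j + ∑ i, (m i : ℚ) * A j i) with hv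
  set w : Fin r → ℚ := fun j => ∑ i, |A j i| with hw
  set u : Fin r → ℚ := fun j => max (v j + w j) 0 with hu
  set c' : Fin r → ℚ := fun i => ∑ j, B i j * u j with hc'
  have hu0 : ∀ j, 0 ≤ u j := fun j => le_max_right _ _
  have hc'0 : ∀ i, 0 ≤ c' i := fun i => Finset.sum_nonneg fun j _ =>
    mul_nonneg (hB i j) (hu0 j)
  set c : Fin r → ℤ := fun i => ⌈c' i⌉ with hc
  refine ⟨fun i => m i + c i, ?_, ?_⟩
  · intro i
    have h1 : q i ≤ (m i : ℚ) := Int.le_ceil _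
    have h2 : (0:ℤ) ≤ c i := Int.ceil_nonneg (hc'0 i)
    push_cast
    have : (0:ℚ) ≤ (c i : ℚ) := by exact_mod_cast h2
    linarith
  · intro j
    have key : ∀ i, ((m i + c i : ℤ) : ℚ) * A j i
        = (m i : ℚ) * A j i + c' i * A j i + ((c i : ℚ) - c' i) * A j i := by
      intro i; push_cast; ring
    rw [Finset.sum_congr rfl fun i _ => key i, Finset.sum_add_distrib,
      Finset.sum_add_distrib]
    have S1 : (∑ i, c' i * A j i) = u j := by
      have h : (∑ i, c' i * A j i) = ∑ k, (∑ i, A j i * B i k) * u k := by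
        simp only [hc', Finset.sum_mul, Finset.mul_sum]
        rw [Finset.sum_comm]
        exact Finset.sum_congr rfl fun k _ => Finset.sum_congr rfl fun i _ => by ring
      rw [h]
      simp [hAB]
    have S2 : -(w j) ≤ ∑ i, ((c i : ℚ) - c' i) * A j i := by
      have : ∀ i, -|A j i| ≤ ((c i : ℚ) - c' i) * A j i := by
        intro i
        have h1 : 0 ≤ (c i : ℚ) - c' i := sub_nonneg.2 (Int.le_ceil _)
        have h2 : (c i : ℚ) - c' i ≤ 1 := by
          have := Int.ceil_lt_add_one (c' i)
          have : (c i : ℚ) < c' i + 1 := by exact_mod_cast this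
          linarith
        rcases le_or_gt 0 (A j i) with h | h
        · have := mul_nonneg h1 h
          have habs : -|A j i| ≤ 0 := neg_nonpos.2 (abs_nonneg _)
          linarith
        · have : A j i ≤ ((c i : ℚ) - c' i) * A j i := by nlinarith
          rw [abs_of_neg h]
          linarith
      calc -(w j) = ∑ i, -|A j i| := by rw [hw]; rw [← Finset.sum_neg_distrib]
        _ ≤ _ := Finset.sum_le_sum fun i _ => this i
    have hpm : p j + ∑ i, (m i : ℚ) * A j i = -v j := by rw [hv]; ring
    have huj : v j + w j ≤ u j := le_max_left _ _
    rw [S1]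
    linarith


lemma aux_exists_min {r : ℕ} (A : Fin r → Fin r → ℚ) (p : Fin r → ℚ)
    (hoff : ∀ j i, j ≠ i → A j i ≤ 0)
    (q : Fin r → ℚ) (nstar : Fin r → ℤ)
    (h1 : ∀ i, q i ≤ (nstar i : ℚ))
    (h2 : ∀ j, 0 ≤ p j + ∑ i, (nstar i : ℚ) * A j i) :
    ∃ n : Fin r → ℤ, (∀ i, q i ≤ (n i : ℚ)) ∧ (∀ j, 0 ≤ p j + ∑ i, (n i : ℚ) * A j i) ∧
      ∀ m : Fin r → ℤ, (∀ i, q i ≤ (m i : ℚ)) → (∀ j, 0 ≤ p j + ∑ i, (m i : ℚ) * A j i) →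
        ∀ i, n i ≤ m i := by
  have mono : ∀ n m : Fin r → ℤ, (∀ i, n i ≤ m i) → ∀ j, n j = m j →
      (0 ≤ p j + ∑ i, (m i : ℚ) * A j i) → 0 ≤ p j + ∑ i, (n i : ℚ) * A j i := by
    intro n m hnm j hj hm
    have hle : (∑ i, (m i : ℚ) * A j i) ≤ ∑ i, (n i : ℚ) * A j i := by
      apply Finset.sum_le_sum
      intro i _
      rcases eq_or_ne j i with rfl | h
      · rw [hj]
      · exact mul_le_mul_of_nonpos_right (by exact_mod_cast hnm i) (hoff j i h)
    linarith
  have H : ∀ fuel : ℕ, ∀ n : Fin r → ℤ,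
      (∀ i, q i ≤ (n i : ℚ)) →
      (∀ m : Fin r → ℤ, (∀ i, q i ≤ (m i : ℚ)) →
        (∀ j, 0 ≤ p j + ∑ i, (m i : ℚ) * A j i) → ∀ i, n i ≤ m i) →
      (∑ i, (nstar i - n i)) ≤ (fuel : ℤ) →
      ∃ n' : Fin r → ℤ, (∀ i, q i ≤ (n' i : ℚ)) ∧
        (∀ j, 0 ≤ p j + ∑ i, (n' i : ℚ) * A j i) ∧
        ∀ m : Fin r → ℤ, (∀ i, q i ≤ (m i : ℚ)) →
          (∀ j, 0 ≤ p j + ∑ i, (m i : ℚ) * A j i) → ∀ i, n' i ≤ m i := by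
    intro fuel
    induction fuel with
    | zero =>
      intro n hn hlb hfuel
      by_cases hd : ∀ j, 0 ≤ p j + ∑ i, (n i : ℚ) * A j i
      · exact ⟨n, hn, hd, hlb⟩
      · exfalso
        push_neg at hd
        obtain ⟨j, hj⟩ := hd
        have hle := hlb nstar h1 h2
        have hlt : n j < nstar j := by
          rcases lt_or_eq_of_le (hle j) with h | h
          · exact h
          · exact absurd (mono n nstar hle j h (h2 j)) (not_le.2 hj)
        have hsum : (1:ℤ) ≤ ∑ i, (nstar i - n i) := by
          calc (1:ℤ) ≤ nstar j - n j := by omega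
            _ ≤ ∑ i, (nstar i - n i) :=
              Finset.single_le_sum (fun i _ => sub_nonneg.2 (hle i)) (Finset.mem_univ j)
        omega
    | succ k ih =>
      intro n hn hlb hfuel
      by_cases hd : ∀ j, 0 ≤ p j + ∑ i, (n i : ℚ) * A j i
      · exact ⟨n, hn, hd, hlb⟩
      · push_neg at hd
        obtain ⟨j, hj⟩ := hd
        set n' : Fin r → ℤ := (fun i => if i = j then n j + 1 else n i) with hn'
        have hlb' : ∀ m : Fin r → ℤ, (∀ i, q i ≤ (m i : ℚ)) →
            (∀ j, 0 ≤ p j + ∑ i, (m i : ℚ) * A j i) → ∀ i, n' i ≤ m i := by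
          intro m hm1 hm2 i
          have hle := hlb m hm1 hm2
          rcases eq_or_ne i j with rfl | h
          · have hlt : n i < m i := by
              rcases lt_or_eq_of_le (hle i) with h | h
              · exact h
              · exact absurd (mono n m hle i h (hm2 i)) (not_le.2 hj)
            simp only [hn', if_pos rfl]
            omega
          · simp only [hn', if_neg h]
            exact hle i
        apply ih n' ?_ hlb' ?_
        · intro i
          rcases eq_or_ne i j with rfl | h
          · simp only [hn', if_pos rfl]
            have := hn i
            push_cast
            linarith
          · simp only [hn', if_neg h]
            exact hn i
        · have e1 : (∑ i, (nstar i - n' i))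
              = (nstar j - n' j) + ∑ i ∈ Finset.univ.erase j, (nstar i - n' i) :=
            (Finset.add_sum_erase _ _ (Finset.mem_univ j)).symm
          have e2 : (∑ i, (nstar i - n i))
              = (nstar j - n j) + ∑ i ∈ Finset.univ.erase j, (nstar i - n i) :=
            (Finset.add_sum_erase _ _ (Finset.mem_univ j)).symm
          have e3 : (∑ i ∈ Finset.univ.erase j, (nstar i - n' i))
              = ∑ i ∈ Finset.univ.erase j, (nstar i - n i) :=
            Finset.sum_congr rfl fun i hi => by
              have hne : i ≠ j := Finset.ne_of_mem_erase hi
              simp [hn', hne]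
          have e4 : n' j = n j + 1 := by simp [hn']
          omega
  have hstart : ∀ m : Fin r → ℤ, (∀ i, q i ≤ (m i : ℚ)) →
      (∀ j, 0 ≤ p j + ∑ i, (m i : ℚ) * A j i) → ∀ i, ⌈q i⌉ ≤ m i := by
    intro m hm1 _ i
    exact Int.ceil_le.2 (hm1 i)
  exact H (∑ i, (nstar i - ⌈q i⌉)).toNat (fun i => ⌈q i⌉) (fun i => Int.le_ceil _)
    hstart (Int.self_le_toNat _)

/-- Corollary 3.21 (stratification): fix `lam₀ ∈ Λ`.  Every stratum `𝖯°_lam` with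
`lam ∈ Λ⁺`, `lam ≡ lam₀ mod ℤΦ^∨` is contained in `Λ_ℚ⁺ ∩ (lam₀ + ℚΦ^∨)`, and every
dominant rational coweight `ν` with `ν - lam₀ ∈ ℚΦ^∨` lies in `𝖯°_lam` for a *unique*
such `lam`; i.e. these strata form a partition of `Λ_ℚ⁺ ∩ (lam₀ + ℚΦ^∨)`. -/
theorem open_strata_partition
    {V : Type*} [AddCommGroup V] [Module ℚ V] {r : ℕ}
    (coroot : Fin r → V) (pairing : Fin r → V →ₗ[ℚ] ℚ) (Λ : AddSubgroup V)
    (hli : LinearIndependent ℚ coroot)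
    (hdiag : ∀ i, pairing i (coroot i) = 2)
    (hoff : ∀ i j, i ≠ j → pairing i (coroot j) ≤ 0)
    (hΛcoroot : ∀ i, coroot i ∈ Λ)
    (hΛint : ∀ μ ∈ Λ, ∀ i, ∃ n : ℤ, pairing i μ = (n : ℚ))
    (hfund : ∃ fcw : Fin r → V,
      (∀ i j, pairing i (fcw j) = if i = j then 1 else 0) ∧ ∀ j, fcw j ∈ Dcone coroot)
    (lam₀ : V) (hlam₀ : lam₀ ∈ Λ) :
    (∀ lam : V, lam ∈ Λ → IsDominant pairing lam →
      (∃ c : Fin r → ℤ, lam - lam₀ = ∑ i, (c i : ℚ) • coroot i) →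
      openStratum coroot pairing Λ lam ⊆
        {ν : V | IsDominant pairing ν ∧ ∃ c : Fin r → ℚ, ν - lam₀ = ∑ i, c i • coroot i}) ∧
    ∀ ν : V, IsDominant pairing ν →
      (∃ c : Fin r → ℚ, ν - lam₀ = ∑ i, c i • coroot i) →
      ∃! lam : V, lam ∈ Λ ∧ IsDominant pairing lam ∧
        (∃ c : Fin r → ℤ, lam - lam₀ = ∑ i, (c i : ℚ) • coroot i) ∧
        ν ∈ openStratum coroot pairing Λ lam := by
  set A : Fin r → Fin r → ℚ := fun j i => pairing j (coroot i) with hA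
  set p : Fin r → ℚ := fun j => pairing j lam₀ with hp
  have pair_vec : ∀ (x : Fin r → ℚ) (j : Fin r),
      pairing j (lam₀ + ∑ i, x i • coroot i) = p j + ∑ i, x i * A j i := by
    intro x j
    rw [map_add, map_sum]
    simp [hp, hA, smul_eq_mul]
  have coords : ∀ a b : Fin r → ℚ,
      (∑ i, a i • coroot i) = ∑ i, b i • coroot i → ∀ i, a i = b i := by
    intro a b hab i
    have h0 : (∑ i, (a i - b i) • coroot i) = 0 := by
      simp only [sub_smul, Finset.sum_sub_distrib, hab, sub_self]
    have := Fintype.linearIndependent_iff.mp hli (fun i => a i - b i) h0 i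
    linarith [this]
  constructor
  · -- containment
    rintro lam _ _ ⟨c, hc⟩ ν ⟨⟨hνdom, d, hd0, hdeq⟩, -⟩
    refine ⟨hνdom, fun i => (c i : ℚ) - d i, ?_⟩
    have h : ν - lam₀ = (lam - lam₀) - (lam - ν) := by abel
    rw [h, hc, hdeq, ← Finset.sum_sub_distrib]
    exact Finset.sum_congr rfl fun i _ => (sub_smul _ _ _).symm
  · rintro ν hνdom ⟨q, hq⟩
    have hνeq : ν = lam₀ + ∑ i, q i • coroot i := by rw [← hq]; abel
    have hqdom : ∀ j, 0 ≤ p j + ∑ i, q i * A j i := by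
      intro j; rw [← pair_vec q j, ← hνeq]; exact hνdom j
    -- inverse Cartan
    obtain ⟨fcw, hfcw1, hfcw2⟩ := hfund
    choose Bc hBpos hBeq using fun j => hfcw2 j
    set B : Fin r → Fin r → ℚ := fun i j => Bc j i with hB
    have hAB : ∀ i k, (∑ l, A i l * B l k) = if i = k then 1 else 0 := by
      intro i k
      rw [← hfcw1 i k, hBeq k, map_sum]
      exact Finset.sum_congr rfl fun l _ => by simp [hA, hB, smul_eq_mul, mul_comm]
    obtain ⟨nstar, hns1, hns2⟩ := aux_exists_upper A p B (fun i j => hBpos j i) hAB q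
    obtain ⟨n, hn1, hn2, hn3⟩ :=
      aux_exists_min A p (fun j i h => hoff j i h) q nstar hns1 hns2
    set lam : V := lam₀ + ∑ i, (n i : ℚ) • coroot i with hlam
    have hlamsub : lam - lam₀ = ∑ i, (n i : ℚ) • coroot i := by rw [hlam]; abel
    have hlamΛ : lam ∈ Λ := by
      refine Λ.add_mem hlam₀ (AddSubgroup.sum_mem _ fun i _ => ?_)
      rw [Int.cast_smul_eq_zsmul ℚ]
      exact AddSubgroup.zsmul_mem Λ (hΛcoroot i) _
    have hlamdom : IsDominant pairing lam := by
      intro j; rw [hlam, pair_vec]; exact hn2 j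
    have hlamnu : lam - ν = ∑ i, ((n i : ℚ) - q i) • coroot i := by
      rw [hlam, hνeq]
      have h : lam₀ + (∑ i, (n i : ℚ) • coroot i) - (lam₀ + ∑ i, q i • coroot i)
          = (∑ i, (n i : ℚ) • coroot i) - ∑ i, q i • coroot i := by abel
      rw [h, ← Finset.sum_sub_distrib]
      exact Finset.sum_congr rfl fun i _ => (sub_smul _ _ _).symm
    have hνP : ν ∈ domPolytope coroot pairing lam :=
      ⟨hνdom, fun i => (n i : ℚ) - q i, fun i => sub_nonneg.2 (hn1 i), hlamnu⟩
    -- generic fact: if μ = lam₀ + ∑ m•coroot with ν ∈ 𝖯_μ then m ∈ S (q ≤ m and dominant)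
    have inS : ∀ m : Fin r → ℤ, ∀ μ : V, μ = lam₀ + ∑ i, (m i : ℚ) • coroot i →
        IsDominant pairing μ → ν ∈ domPolytope coroot pairing μ →
        (∀ i, q i ≤ (m i : ℚ)) ∧ (∀ j, 0 ≤ p j + ∑ i, (m i : ℚ) * A j i) := by
      intro m μ hμeq hμdom hνμ
      obtain ⟨-, e, he0, heq⟩ := hνμ
      have hμν : μ - ν = ∑ i, ((m i : ℚ) - q i) • coroot i := by
        rw [hμeq, hνeq]
        have h : lam₀ + (∑ i, (m i : ℚ) • coroot i) - (lam₀ + ∑ i, q i • coroot i)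
            = (∑ i, (m i : ℚ) • coroot i) - ∑ i, q i • coroot i := by abel
        rw [h, ← Finset.sum_sub_distrib]
        exact Finset.sum_congr rfl fun i _ => (sub_smul _ _ _).symm
      have hcoord : ∀ i, e i = (m i : ℚ) - q i := coords e _ (heq ▸ hμν)
      refine ⟨fun i => ?_, fun j => ?_⟩
      · have := he0 i; rw [hcoord i] at this; linarith
      · rw [← pair_vec (fun i => (m i : ℚ)) j, ← hμeq]; exact hμdom j
    have hνopen : ν ∈ openStratum coroot pairing Λ lam := by
      refine ⟨hνP, ?_⟩
      intro hmem
      simp only [Set.mem_iUnion, Set.mem_setOf_eq] at hmem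
      obtain ⟨μ, ⟨hμΛ, hμdom, ⟨k, hk⟩, hμne⟩, hνμ⟩ := hmem
      -- μ = lam₀ + ∑ (n i - k i) • coroot i
      have hμeq : μ = lam₀ + ∑ i, ((n i - (k i : ℤ) : ℤ) : ℚ) • coroot i := by
        have h2 : ∀ i, ((n i - (k i : ℤ) : ℤ) : ℚ) • coroot i
            = (n i : ℚ) • coroot i - (k i : ℚ) • coroot i := by
          intro i; rw [← sub_smul]; norm_num
        rw [Finset.sum_congr rfl fun i _ => h2 i, Finset.sum_sub_distrib, ← hk, hlam]
        abel
      obtain ⟨hq_le, hdom'⟩ := inS (fun i => n i - (k i : ℤ)) μ hμeq hμdom hνμ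
      have hmin := hn3 (fun i => n i - (k i : ℤ)) hq_le hdom'
      have hk0 : ∀ i, (k i : ℚ) = 0 := by
        intro i
        have h5 : n i ≤ n i - (k i : ℤ) := hmin i
        have h6 : (k i : ℤ) ≤ 0 := by omega
        exact_mod_cast le_antisymm (show (k i : ℚ) ≤ 0 by exact_mod_cast h6) (by positivity)
      apply hμne
      have : lam - μ = 0 := by
        rw [hk, Finset.sum_congr rfl fun i _ => by rw [hk0 i, zero_smul]]
        simp
      have := sub_eq_zero.mp this
      exact this.symm
    refine ⟨lam, ⟨hlamΛ, hlamdom, ⟨n, hlamsub⟩, hνopen⟩, ?_⟩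
    -- uniqueness
    rintro lam' ⟨hΛ', hdom', ⟨c', hc'⟩, hνP', hnot⟩
    have hlam'eq : lam' = lam₀ + ∑ i, (c' i : ℚ) • coroot i := by
      rw [← hc']; abel
    obtain ⟨hq_le', hdomc'⟩ := inS c' lam' hlam'eq hdom' hνP'
    have hmin := hn3 c' hq_le' hdomc'
    by_contra hne
    apply hnot
    simp only [Set.mem_iUnion, Set.mem_setOf_eq]
    refine ⟨lam, ⟨hlamΛ, hlamdom, ⟨fun i => (c' i - n i).toNat, ?_⟩, ?_⟩, hνP⟩
    · -- lam' - lam = ∑ (c' - n) coroot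
      have h : lam' - lam = ∑ i, ((c' i - n i : ℤ) : ℚ) • coroot i := by
        rw [hlam'eq, hlam]
        have h2 : lam₀ + (∑ i, (c' i : ℚ) • coroot i) - (lam₀ + ∑ i, (n i : ℚ) • coroot i)
            = (∑ i, (c' i : ℚ) • coroot i) - ∑ i, (n i : ℚ) • coroot i := by abel
        rw [h2, ← Finset.sum_sub_distrib]
        refine Finset.sum_congr rfl fun i _ => ?_
        rw [← sub_smul]; norm_num
      rw [h]
      refine Finset.sum_congr rfl fun i _ => ?_
      congr 1
      have h4 : n i ≤ c' i := hmin i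
      have h3 : ((c' i - n i).toNat : ℤ) = c' i - n i := Int.toNat_of_nonneg (by omega)
      show ((c' i - n i : ℤ) : ℚ) = (((c' i - n i).toNat : ℕ) : ℚ)
      exact_mod_cast h3.symm
    · intro heq; exact hne (heq ▸ rfl)
end

section
/- Let λ, μ₁, μ₂ ∈ Λ⁺ with μ₁ ≤ λ and μ₂ ≤ λ. Then there exists μ₃ ∈ Λ⁺ with μ₃ ≤ μ₁ and μ₃ ≤ μ₂ such that for every tuple (a₁,…,a_r) of natural numbers the following are equivalent: (i) for all i, a_i ≥ ⟨ω_i, λ − μ₁⟩ and a_i ≥ ⟨ω_i, λ − μ₂⟩; (ii) for all i, a_i ≥ ⟨ω_i, λ − μ₃⟩. (This is the coordinate form of the paper's Proposition 3.22: the intersection of the embedded strata i_{μ₁λ}(𝔠₊^{μ₁}) ∩ i_{μ₂λ}(𝔠₊^{μ₂}) inside the 𝒪-points of the extended Steinberg base, 𝒪 = k[[ϖ]], equals i_{μ₃λ}(𝔠₊^{μ₃}), where membership of a point in i_{μλ}(𝔠₊^{μ}) is expressed by the valuations a_i of its coordinates satisfying a_i ≥ ⟨ω_i, λ − μ⟩.)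 -/
/-- Proposition 3.22 (coordinate form): let `lam, μ₁, μ₂ ∈ Λ⁺` with `μ₁ ≤ lam` and
`μ₂ ≤ lam`, say `lam - μ₁ = ∑ n₁ᵢ • αᵢ^∨` and `lam - μ₂ = ∑ n₂ᵢ • αᵢ^∨`.  Then there is
`μ₃ ∈ Λ⁺` with `μ₃ ≤ μ₁`, `μ₃ ≤ μ₂`, `lam - μ₃ = ∑ n₃ᵢ • αᵢ^∨`, such that for every
tuple `a : Fin r → ℕ`:  (`∀ i, aᵢ ≥ n₁ᵢ ∧ aᵢ ≥ n₂ᵢ`) ↔ (`∀ i, aᵢ ≥ n₃ᵢ`).  This expresses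
`i_{μ₁ lam}(𝔠₊^{μ₁}) ∩ i_{μ₂ lam}(𝔠₊^{μ₂}) = i_{μ₃ lam}(𝔠₊^{μ₃})` inside `𝔠₊(𝒪)`, where a
point lies in `i_{μ lam}(𝔠₊^{μ})` iff the valuations `aᵢ` of its coordinates satisfy
`aᵢ ≥ ⟨ωᵢ, lam - μ⟩`. -/
theorem steinberg_strata_intersection
    {V : Type*} [AddCommGroup V] [Module ℚ V] {r : ℕ}
    (coroot : Fin r → V) (pairing : Fin r → V →ₗ[ℚ] ℚ) (Λ : AddSubgroup V)
    (hli : LinearIndependent ℚ coroot)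
    (hdiag : ∀ i, pairing i (coroot i) = 2)
    (hoff : ∀ i j, i ≠ j → pairing i (coroot j) ≤ 0)
    (hΛcoroot : ∀ i, coroot i ∈ Λ)
    (hΛint : ∀ μ ∈ Λ, ∀ i, ∃ n : ℤ, pairing i μ = (n : ℚ))
    (lam μ₁ μ₂ : V) (hlamΛ : lam ∈ Λ) (hμ₁Λ : μ₁ ∈ Λ) (hμ₂Λ : μ₂ ∈ Λ)
    (hlamdom : IsDominant pairing lam)
    (hμ₁dom : IsDominant pairing μ₁) (hμ₂dom : IsDominant pairing μ₂)
    (n₁ : Fin r → ℕ) (hn₁ : lam - μ₁ = ∑ i, (n₁ i : ℚ) • coroot i)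
    (n₂ : Fin r → ℕ) (hn₂ : lam - μ₂ = ∑ i, (n₂ i : ℚ) • coroot i) :
    ∃ μ₃ : V, μ₃ ∈ Λ ∧ IsDominant pairing μ₃ ∧ leZ coroot μ₃ μ₁ ∧ leZ coroot μ₃ μ₂ ∧
      ∃ n₃ : Fin r → ℕ, lam - μ₃ = ∑ i, (n₃ i : ℚ) • coroot i ∧
        ∀ a : Fin r → ℕ,
          ((∀ i, n₁ i ≤ a i ∧ n₂ i ≤ a i) ↔ (∀ i, n₃ i ≤ a i)) := by
  classical
  let n₃ : Fin r → ℕ := fun i => max (n₁ i) (n₂ i)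
  set μ₃ : V := lam - ∑ i, (n₃ i : ℚ) • coroot i with hμ₃
  have hμ₃eq : lam - μ₃ = ∑ i, (n₃ i : ℚ) • coroot i := by
    rw [hμ₃]; abel
  -- key dominance lemma
  have key : ∀ (m : Fin r → ℕ) (μ : V), IsDominant pairing μ →
      lam - μ = ∑ j, (m j : ℚ) • coroot j → (∀ j, m j ≤ n₃ j) →
      ∀ i, m i = n₃ i → 0 ≤ pairing i μ₃ := by
    intro m μ hdom hμ hle i hi
    have hμ₃μ : μ₃ = μ - ∑ j, ((n₃ j : ℚ) - (m j : ℚ)) • coroot j := by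
      rw [hμ₃]
      have : lam = μ + ∑ j, (m j : ℚ) • coroot j := by
        rw [← hμ]; abel
      rw [this]
      simp only [sub_smul, Finset.sum_sub_distrib]
      abel
    rw [hμ₃μ, map_sub, map_sum]
    have hsum : ∑ j, (pairing i) (((n₃ j : ℚ) - (m j : ℚ)) • coroot j) ≤ 0 := by
      apply Finset.sum_nonpos
      intro j _
      rw [map_smul, smul_eq_mul]
      by_cases hij : j = i
      · subst hij; rw [hi]; simp
      · apply mul_nonpos_of_nonneg_of_nonpos
        · have := hle j
          have : (m j : ℚ) ≤ (n₃ j : ℚ) := by exact_mod_cast this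
          linarith
        · exact hoff i j (Ne.symm hij)
    have := hdom i
    linarith
  have hle₁ : ∀ j, n₁ j ≤ n₃ j := fun j => le_max_left _ _
  have hle₂ : ∀ j, n₂ j ≤ n₃ j := fun j => le_max_right _ _
  refine ⟨μ₃, ?_, ?_, ?_, ?_, n₃, hμ₃eq, ?_⟩
  · -- μ₃ ∈ Λ
    refine AddSubgroup.sub_mem Λ hlamΛ (AddSubgroup.sum_mem Λ fun i _ => ?_)
    rw [Nat.cast_smul_eq_nsmul]
    exact AddSubgroup.nsmul_mem Λ (hΛcoroot i) _
  · -- dominant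
    intro i
    rcases max_choice (n₁ i) (n₂ i) with h | h
    · exact key n₁ μ₁ hμ₁dom hn₁ hle₁ i h.symm
    · exact key n₂ μ₂ hμ₂dom hn₂ hle₂ i h.symm
  · -- μ₃ ≤ μ₁
    refine ⟨fun i => n₃ i - n₁ i, ?_⟩
    have : μ₁ - μ₃ = (lam - μ₃) - (lam - μ₁) := by abel
    rw [this, hμ₃eq, hn₁, ← Finset.sum_sub_distrib]
    refine Finset.sum_congr rfl fun i _ => ?_
    rw [← sub_smul, Nat.cast_sub (hle₁ i)]
  · -- μ₃ ≤ μ₂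
    refine ⟨fun i => n₃ i - n₂ i, ?_⟩
    have : μ₂ - μ₃ = (lam - μ₃) - (lam - μ₂) := by abel
    rw [this, hμ₃eq, hn₂, ← Finset.sum_sub_distrib]
    refine Finset.sum_congr rfl fun i _ => ?_
    rw [← sub_smul, Nat.cast_sub (hle₂ i)]
  · intro a
    constructor
    · intro h i
      exact max_le (h i).1 (h i).2
    · intro h i
      exact ⟨le_trans (hle₁ i) (h i), le_trans (hle₂ i) (h i)⟩
end

section
/- Let λ ∈ Λ⁺ be a dominant integral coweight and ν ∈ Λ_ℚ⁺ a dominant rational coweight with ν ≤_ℚ λ. Then there exists a unique μ ∈ Λ⁺ such that: ν ≤_ℚ μ, μ ≤ λ, and μ ≤ μ′ for every μ′ ∈ Λ⁺ satisfying ν ≤_ℚ μ′ and μ′ ≤ λ. In other words, there is a unique smallest dominant integral coweight μ with ν ≤_ℚ μ and μ ≤ λ (the 'best integral approximation' of ν, the paper's Lemma 3.24). -/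
/-- Lemma 3.24 ("best integral approximation"): given a dominant integral coweight
`lam ∈ Λ⁺` and a dominant rational coweight `ν` with `ν ≤_ℚ lam`, there is a unique
smallest dominant integral coweight `μ ∈ Λ⁺` with `ν ≤_ℚ μ` and `μ ≤ lam`. -/
theorem best_integral_approximation
    {V : Type*} [AddCommGroup V] [Module ℚ V] {r : ℕ}
    (coroot : Fin r → V) (pairing : Fin r → V →ₗ[ℚ] ℚ) (Λ : AddSubgroup V)
    (hli : LinearIndependent ℚ coroot)
    (hdiag : ∀ i, pairing i (coroot i) = 2)
    (hoff : ∀ i j, i ≠ j → pairing i (coroot j) ≤ 0)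
    (hΛcoroot : ∀ i, coroot i ∈ Λ)
    (hΛint : ∀ μ ∈ Λ, ∀ i, ∃ n : ℤ, pairing i μ = (n : ℚ))
    (hfund : ∃ fcw : Fin r → V,
      (∀ i j, pairing i (fcw j) = if i = j then 1 else 0) ∧ ∀ j, fcw j ∈ Dcone coroot)
    (lam : V) (hlamΛ : lam ∈ Λ) (hlamdom : IsDominant pairing lam)
    (ν : V) (hνdom : IsDominant pairing ν) (hν : leQ coroot ν lam) :
    ∃! μ : V, μ ∈ Λ ∧ IsDominant pairing μ ∧ leQ coroot ν μ ∧ leZ coroot μ lam ∧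
      ∀ μ' : V, μ' ∈ Λ → IsDominant pairing μ' → leQ coroot ν μ' → leZ coroot μ' lam →
        leZ coroot μ μ' := by
  classical
  obtain ⟨f, hf0, hfeq⟩ := hν
  -- coefficient uniqueness
  have hcoef : ∀ a b : Fin r → ℚ, ∑ i, a i • coroot i = ∑ i, b i • coroot i → a = b := by
    intro a b hab
    have h0 : ∑ i, (a i - b i) • coroot i = 0 := by
      simp [sub_smul, Finset.sum_sub_distrib, hab]
    have h := Fintype.linearIndependent_iff.mp hli (fun i => a i - b i) h0
    funext i
    have hi : a i - b i = 0 := h i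
    linarith
  have pair_formula : ∀ (k : Fin r) (c : Fin r → ℚ),
      pairing k (lam - ∑ i, c i • coroot i)
        = pairing k lam - ∑ i, c i * pairing k (coroot i) := by
    intro k c
    simp [map_sub, map_sum, map_smul, smul_eq_mul]
  -- the set of admissible coefficient vectors
  let C : (Fin r → ℕ) → Prop := fun c =>
    (lam - ∑ i, (c i : ℚ) • coroot i) ∈ Λ ∧
    IsDominant pairing (lam - ∑ i, (c i : ℚ) • coroot i) ∧
    leQ coroot ν (lam - ∑ i, (c i : ℚ) • coroot i)
  have hmemΛ : ∀ c : Fin r → ℕ, lam - ∑ i, (c i : ℚ) • coroot i ∈ Λ := by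
    intro c
    refine AddSubgroup.sub_mem _ hlamΛ (AddSubgroup.sum_mem _ fun i _ => ?_)
    rw [Nat.cast_smul_eq_nsmul]
    exact nsmul_mem (hΛcoroot i) _
  have hbound : ∀ c : Fin r → ℕ, C c → ∀ i, (c i : ℚ) ≤ f i := by
    intro c hc i
    obtain ⟨e, he0, heeq⟩ := hc.2.2
    have key : ∑ j, (f j - (c j : ℚ)) • coroot j
        = (lam - ∑ j, (c j : ℚ) • coroot j) - ν := by
      rw [show (lam - ∑ j, (c j : ℚ) • coroot j) - ν
            = (lam - ν) - ∑ j, (c j : ℚ) • coroot j by abel, hfeq]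
      simp [sub_smul, Finset.sum_sub_distrib]
    have h := hcoef (fun j => f j - (c j : ℚ)) e (by rw [key, heeq])
    have := congrFun h i
    have := he0 i
    linarith
  -- closure under pointwise max
  have hdom_aux : ∀ c₁ c₂ : Fin r → ℕ, C c₁ → ∀ k : Fin r, c₂ k ≤ c₁ k →
      0 ≤ pairing k (lam - ∑ i, ((max (c₁ i) (c₂ i) : ℕ) : ℚ) • coroot i) := by
    intro c₁ c₂ hc₁ k hk
    have h1 := hc₁.2.1 k
    rw [pair_formula] at h1 ⊢
    have hterm : ∀ i ∈ Finset.univ, (c₁ i : ℚ) * pairing k (coroot i)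
        - ((max (c₁ i) (c₂ i) : ℕ) : ℚ) * pairing k (coroot i) ≥ 0 := by
      intro i _
      rcases eq_or_ne i k with rfl | hik
      · have : max (c₁ i) (c₂ i) = c₁ i := max_eq_left hk
        rw [this]; ring_nf; exact le_refl 0
      · have h2 : (c₁ i : ℚ) ≤ ((max (c₁ i) (c₂ i) : ℕ) : ℚ) := by
          exact_mod_cast le_max_left _ _
        have h3 := hoff k i (Ne.symm hik)
        nlinarith
    have hsum : ∑ i, ((max (c₁ i) (c₂ i) : ℕ) : ℚ) * pairing k (coroot i)
        ≤ ∑ i, (c₁ i : ℚ) * pairing k (coroot i) := by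
      have := Finset.sum_nonneg hterm
      rw [Finset.sum_sub_distrib] at this
      linarith
    linarith
  have hmeet : ∀ c₁ c₂ : Fin r → ℕ, C c₁ → C c₂ → C (fun i => max (c₁ i) (c₂ i)) := by
    intro c₁ c₂ hc₁ hc₂
    refine ⟨hmemΛ _, ?_, ?_⟩
    · intro k
      rcases le_total (c₂ k) (c₁ k) with h | h
      · exact hdom_aux c₁ c₂ hc₁ k h
      · have := hdom_aux c₂ c₁ hc₂ k h
        simpa [max_comm] using this
    · refine ⟨fun i => f i - ((max (c₁ i) (c₂ i) : ℕ) : ℚ), fun i => ?_, ?_⟩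
      · show 0 ≤ f i - ((max (c₁ i) (c₂ i) : ℕ) : ℚ)
        rcases le_total (c₁ i) (c₂ i) with h | h
        · rw [max_eq_right h]; linarith [hbound c₂ hc₂ i]
        · rw [max_eq_left h]; linarith [hbound c₁ hc₁ i]
      · rw [show (lam - ∑ i, ((max (c₁ i) (c₂ i) : ℕ) : ℚ) • coroot i) - ν
            = (lam - ν) - ∑ i, ((max (c₁ i) (c₂ i) : ℕ) : ℚ) • coroot i by abel, hfeq]
        simp [sub_smul, Finset.sum_sub_distrib]
  -- pick a coefficient vector of maximal total sum
  let N := ∑ i, ⌊f i⌋₊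
  have hsumbound : ∀ c : Fin r → ℕ, C c → ∑ i, c i ≤ N := fun c hc =>
    Finset.sum_le_sum fun i _ => Nat.le_floor (hbound c hc i)
  let Q : ℕ → Prop := fun n => ∃ c : Fin r → ℕ, C c ∧ ∑ i, c i = n
  have hC0 : C (fun _ => 0) := by
    refine ⟨by simpa using hlamΛ, by simpa using hlamdom, ?_⟩
    simp only [Nat.cast_zero, zero_smul, Finset.sum_const_zero, sub_zero]
    exact ⟨f, hf0, hfeq⟩
  have hQ0 : Q 0 := ⟨fun _ => 0, hC0, by simp⟩
  have hQspec : Q (Nat.findGreatest Q N) :=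
    Nat.findGreatest_spec (Nat.zero_le N) hQ0
  obtain ⟨cstar, hcstar, hsum⟩ := hQspec
  -- maximality of cstar
  have hmax : ∀ c : Fin r → ℕ, C c → ∀ i, c i ≤ cstar i := by
    intro c hc i
    by_contra hlt
    push_neg at hlt
    have hm := hmeet cstar c hcstar hc
    have hle : ∑ j, max (cstar j) (c j) ≤ Nat.findGreatest Q N := by
      by_contra hgt
      push_neg at hgt
      exact Nat.findGreatest_is_greatest hgt (hsumbound _ hm)
        ⟨fun j => max (cstar j) (c j), hm, rfl⟩
    have hlt2 : ∑ j, cstar j < ∑ j, max (cstar j) (c j) := by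
      refine Finset.sum_lt_sum (fun j _ => le_max_left _ _) ⟨i, Finset.mem_univ i, ?_⟩
      exact lt_of_lt_of_le hlt (le_max_right _ _)
    omega
  refine ⟨lam - ∑ i, ((cstar i : ℕ) : ℚ) • coroot i,
    ⟨hcstar.1, hcstar.2.1, hcstar.2.2, ⟨cstar, by abel⟩, ?_⟩, ?_⟩
  · -- minimality
    intro μ' hμ'Λ hμ'dom hμ'Q hμ'le
    obtain ⟨c', hc'⟩ := hμ'le
    have hμ'eq : μ' = lam - ∑ i, ((c' i : ℕ) : ℚ) • coroot i := by
      rw [← hc']; abel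
    have hCc' : C c' := by rw [hμ'eq] at hμ'Λ hμ'dom hμ'Q; exact ⟨hμ'Λ, hμ'dom, hμ'Q⟩
    have hle := hmax c' hCc'
    refine ⟨fun i => cstar i - c' i, ?_⟩
    rw [hμ'eq]
    have : ∀ i, ((cstar i - c' i : ℕ) : ℚ) = (cstar i : ℚ) - (c' i : ℚ) := fun i =>
      Nat.cast_sub (hle i)
    simp only [this, sub_smul, Finset.sum_sub_distrib]
    abel
  · -- uniqueness
    rintro mu2 ⟨h1, h2, h3, h4, h5⟩
    have hA : leZ coroot (lam - ∑ i, ((cstar i : ℕ) : ℚ) • coroot i) mu2 := by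
      -- from minimality of our μ applied to mu2 : need the minimality property we just proved
      obtain ⟨c', hc'⟩ := h4
      have hmu2eq : mu2 = lam - ∑ i, ((c' i : ℕ) : ℚ) • coroot i := by rw [← hc']; abel
      have hCc' : C c' := by rw [hmu2eq] at h1 h2 h3; exact ⟨h1, h2, h3⟩
      have hle := hmax c' hCc'
      refine ⟨fun i => cstar i - c' i, ?_⟩
      rw [hmu2eq]
      have : ∀ i, ((cstar i - c' i : ℕ) : ℚ) = (cstar i : ℚ) - (c' i : ℚ) := fun i =>
        Nat.cast_sub (hle i)
      simp only [this, sub_smul, Finset.sum_sub_distrib]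
      abel
    have hB : leZ coroot mu2 (lam - ∑ i, ((cstar i : ℕ) : ℚ) • coroot i) :=
      h5 _ hcstar.1 hcstar.2.1 hcstar.2.2 ⟨cstar, by abel⟩
    obtain ⟨a, ha⟩ := hA
    obtain ⟨b, hb⟩ := hB
    have hab : ∑ i, ((a i : ℚ) + (b i : ℚ)) • coroot i = ∑ i, (0 : ℚ) • coroot i := by
      have hsplit : ∑ i, ((a i : ℚ) + (b i : ℚ)) • coroot i
          = (∑ i, (a i : ℚ) • coroot i) + ∑ i, (b i : ℚ) • coroot i := by
        rw [← Finset.sum_add_distrib]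
        exact Finset.sum_congr rfl fun i _ => add_smul _ _ _
      rw [hsplit, ← ha, ← hb]
      simp only [zero_smul, Finset.sum_const_zero]
      abel
    have h := hcoef _ _ hab
    have hz : ∀ i, (b i : ℚ) = 0 := by
      intro i
      have := congrFun h i
      have h1 : (0:ℚ) ≤ (a i : ℚ) := Nat.cast_nonneg _
      have h2 : (0:ℚ) ≤ (b i : ℚ) := Nat.cast_nonneg _
      linarith
    have : (lam - ∑ i, ((cstar i : ℕ) : ℚ) • coroot i) - mu2 = 0 := by
      rw [hb]
      simp [hz]
    have := sub_eq_zero.mp this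
    exact this.symm
end

section
/- Let γ̄ : M → Kˣ be a group homomorphism (a point of the split torus with character lattice M over K) such that γ̄(α) ≠ 1 for all α ∈ Φ and v(γ̄(α)) ≥ 0 for all α ∈ Φ⁺. Then the discriminant valuation d = Σ_{α∈Φ} v(γ̄(α) − 1) satisfies d = 2·Σ_{α∈Φ⁺} v(γ̄(α) − 1) − Σ_{α∈Φ⁺} v(γ̄(α)); in the paper's notation, d(γ) = 2 Σ_{α∈Φ⁺} val(α(γ̄) − 1) − ⟨2ρ, ν_γ⟩, where the Newton point ν_γ pairs with a character χ by ⟨χ, ν_γ⟩ = v(γ̄(χ)) and 2ρ = Σ_{α∈Φ⁺} α. (The paper's Lemma 3.2 computing the discriminant valuation in terms of the Newton point.) -/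
/-!
Setting: `K` is a field with a (ℚ-valued, additively written) valuation `v`, defined on
nonzero elements; `M` is a finitely generated free abelian group (the character lattice
of a split maximal torus); `Φ = Φ⁺ ⊔ (−Φ⁺) ⊆ M` is a finite reduced root system with a
chosen set of positive roots; and `γ : M → Kˣ` is a group homomorphism (an `M`-point of
the split torus over `K`), encoded as a map `γ : M → K` with nonvanishing values
satisfying `γ (α + β) = γ α * γ β`.
-/

/-- Lemma 3.2: if `γ(α) ≠ 1` for all roots `α` and `v(γ(α)) ≥ 0` for all positive roots
`α`, then the discriminant valuation `d = ∑_{α ∈ Φ} v(γ(α) − 1)` equals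
`2 ∑_{α ∈ Φ⁺} v(γ(α) − 1) − ∑_{α ∈ Φ⁺} v(γ(α))`; in the paper's notation,
`d(γ) = 2 ∑_{α ∈ Φ⁺} val(α(γ̄) − 1) − ⟨2ρ, ν_γ⟩`, where `⟨χ, ν_γ⟩ = v(γ̄(χ))` and
`2ρ = ∑_{α ∈ Φ⁺} α`. -/
theorem discriminant_valuation_via_newton_point
    {K : Type*} [Field K] (v : K → ℚ)
    (hv_mul : ∀ a b : K, a ≠ 0 → b ≠ 0 → v (a * b) = v a + v b)
    (hv_add : ∀ a b : K, a ≠ 0 → b ≠ 0 → a + b ≠ 0 → min (v a) (v b) ≤ v (a + b))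
    {M : Type*} [AddCommGroup M] [DecidableEq M] [Module.Free ℤ M] [Module.Finite ℤ M]
    (γ : M → K) (hγ_ne : ∀ m, γ m ≠ 0) (hγ_mul : ∀ m n, γ (m + n) = γ m * γ n)
    (Φpos Φ : Finset M)
    (hΦ : Φ = Φpos ∪ Φpos.image (fun α => -α))
    (hdisj : Disjoint Φpos (Φpos.image (fun α => -α)))
    (hreg : ∀ α ∈ Φ, γ α ≠ 1)
    (hpos : ∀ α ∈ Φpos, 0 ≤ v (γ α)) :
    ∑ α ∈ Φ, v (γ α - 1)
      = 2 * (∑ α ∈ Φpos, v (γ α - 1)) - ∑ α ∈ Φpos, v (γ α) := by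
  have h1 : v 1 = 0 := by
    have := hv_mul 1 1 one_ne_zero one_ne_zero
    simp at this; linarith
  have hneg1 : v (-1 : K) = 0 := by
    have := hv_mul (-1) (-1) (by norm_num) (by norm_num)
    simp at this; linarith
  have hvneg : ∀ a : K, a ≠ 0 → v (-a) = v a := by
    intro a ha
    have := hv_mul (-1) a (by norm_num) ha
    simp at this; rw [this, hneg1]; ring
  have hγ0 : γ 0 = 1 := by
    have h := hγ_mul 0 0
    rw [add_zero] at h
    have : γ 0 * 1 = γ 0 * γ 0 := by rw [mul_one, ← h]
    exact (mul_left_cancel₀ (hγ_ne 0) this).symm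
  have hinv : ∀ α, γ (-α) = (γ α)⁻¹ := by
    intro α
    exact eq_inv_of_mul_eq_one_right
      (by rw [← hγ_mul, add_neg_cancel, hγ0])
  have hvinv : ∀ α, v ((γ α)⁻¹) = - v (γ α) := by
    intro α
    have := hv_mul (γ α) (γ α)⁻¹ (hγ_ne α) (inv_ne_zero (hγ_ne α))
    rw [mul_inv_cancel₀ (hγ_ne α)] at this
    rw [h1] at this; linarith
  have key : ∀ α ∈ Φpos, v (γ (-α) - 1) = v (γ α - 1) - v (γ α) := by
    intro α hα
    have hα' : α ∈ Φ := by rw [hΦ]; exact Finset.mem_union_left _ hα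
    have hne : γ α - 1 ≠ 0 := sub_ne_zero.mpr (hreg α hα')
    have : γ (-α) - 1 = (γ α)⁻¹ * (-(γ α - 1)) := by
      rw [hinv, mul_neg, mul_sub, inv_mul_cancel₀ (hγ_ne α)]; ring
    rw [this, hv_mul _ _ (inv_ne_zero (hγ_ne α)) (neg_ne_zero.mpr hne),
      hvinv, hvneg _ hne]
    ring
  rw [hΦ, Finset.sum_union hdisj,
    Finset.sum_image (fun a _ b _ h => neg_injective h),
    Finset.sum_congr rfl key]
  rw [Finset.sum_sub_distrib]
  ring
end

section
/- Let 𝔱 be a finite-dimensional k-vector space and w ∈ GL(𝔱) with wᵉ = 1 which preserves a nondegenerate symmetric bilinear form B on 𝔱 (B(wx, wy) = B(x, y)). Define the k-linear automorphism σ of 𝔱 ⊗_k k[[u]] by σ(x ⊗ f(u)) = w(x) ⊗ f(ζu), and let M := (𝔱 ⊗_k k[[u]])^σ be the σ-fixed submodule (a k[[uᵉ]]-submodule). Then 2·dim_k((𝔱 ⊗_k k[[u]]) / (k[[u]]·M)) = e·(dim_k 𝔱 − dim_k 𝔱^w), where k[[u]]·M is the k[[u]]-submodule generated by M and 𝔱^w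 is the fixed subspace of w. Explicitly, M = ⊕_{i=0}^{e−1} 𝔱(i) ⊗ u^{(e−i) mod e}·k[[uᵉ]] where 𝔱(i) = ker(w − ζⁱ), and B forces dim 𝔱(i) = dim 𝔱(e−i). (The key linear-algebra computation in the paper's proof of Theorem 3.17 computing dim P_a for ramified γ; note the paper's displayed value e·(dim 𝔱 − dim 𝔱^w) for the quotient contains a factor-2 slip, and the value stated here is the one consistent with the proof and with the final dimension formula dim P_a = ⟨ρ,λ⟩ + (d(γ) − c(γ))/2.) -/
open Finset

open scoped TensorProduct

/-- The `k`-linear substitution map `f(u) ↦ f(ζ·u)` on formal power series. -/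
noncomputable def rescaleL (k : Type*) [CommRing k] (ζ : k) :
    PowerSeries k →ₗ[k] PowerSeries k where
  toFun := PowerSeries.rescale ζ
  map_add' f g := map_add _ f g
  map_smul' c f := by
    ext n
    simp [PowerSeries.coeff_rescale, mul_left_comm]

/-- The twisted Galois action `σ(f(u) ⊗ x) = f(ζu) ⊗ w(x)` on `k[[u]] ⊗ₖ 𝔱`. -/
noncomputable def twistedSigma (k : Type*) [CommRing k] (ζ : k)
    {t : Type*} [AddCommGroup t] [Module k t] (w : t →ₗ[k] t) :
    PowerSeries k ⊗[k] t →ₗ[k] PowerSeries k ⊗[k] t :=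
  TensorProduct.map (rescaleL k ζ) w



lemma eigen_decomp {k : Type*} [Field k] {e : ℕ} (he : 1 ≤ e) (he' : (e : k) ≠ 0)
    {ζ : k} (hζ : IsPrimitiveRoot ζ e) {t : Type*} [AddCommGroup t] [Module k t]
    (w : t →ₗ[k] t) (hw : w ^ e = 1) (x : t) :
    ∃ c : Fin e → t, (∀ i, w (c i) = ζ ^ (i : ℕ) • c i) ∧ ∑ i, c i = x := by
  have hζe : ζ ^ e = 1 := hζ.pow_eq_one
  have hζ0 : ζ ≠ 0 := by
    intro h
    rw [h, zero_pow (by omega)] at hζe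
    exact zero_ne_one hζe
  set ξ := ζ⁻¹ with hξdef
  have hmul : ζ * ξ = 1 := mul_inv_cancel₀ hζ0
  have hξe : ξ ^ e = 1 := by rw [hξdef, inv_pow, hζe, inv_one]
  have hstep : ∀ j, w ((w ^ j) x) = (w ^ (j + 1)) x := by
    intro j
    rw [pow_succ', Module.End.mul_apply]
  refine ⟨fun i => (e : k)⁻¹ • ∑ j ∈ range e, ξ ^ ((i : ℕ) * j) • (w ^ j) x, ?_, ?_⟩
  · intro i
    rw [map_smul, map_sum]
    simp only [map_smul, hstep]
    rw [smul_comm (ζ ^ (i : ℕ)) ((e : k)⁻¹)]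
    congr 1
    rw [smul_sum]
    set g : ℕ → t := fun j => (ζ ^ (i : ℕ) * ξ ^ ((i : ℕ) * j)) • (w ^ j) x with hg
    have hζξ : ζ ^ (i : ℕ) * ξ ^ (i : ℕ) = 1 := by rw [← mul_pow, hmul, one_pow]
    have hcoe : ∀ j : ℕ, ζ ^ (i : ℕ) * ξ ^ ((i : ℕ) * (j + 1)) = ξ ^ ((i : ℕ) * j) := by
      intro j
      rw [Nat.mul_add, mul_one, pow_add, mul_left_comm, ← mul_assoc, mul_assoc, hζξ, mul_one]
    have h1 : ∀ j ∈ range e, ξ ^ ((i : ℕ) * j) • (w ^ (j + 1)) x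
        - ζ ^ (i : ℕ) • ξ ^ ((i : ℕ) * j) • (w ^ j) x = g (j + 1) - g j := by
      intro j _
      rw [hg]
      simp only [smul_smul, hcoe]
    rw [← sub_eq_zero, ← Finset.sum_sub_distrib, Finset.sum_congr rfl h1,
      Finset.sum_range_sub g, sub_eq_zero]
    rw [hg]
    simp only
    rw [show (i : ℕ) * e = e * (i : ℕ) from Nat.mul_comm _ _, pow_mul, hξe, one_pow,
      Nat.mul_zero, pow_zero, hw, pow_zero]
  · rw [Fin.sum_univ_eq_sum_range (fun n => (e : k)⁻¹ • ∑ j ∈ range e, ξ ^ (n * j) • (w ^ j) x) e]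
    rw [← smul_sum, Finset.sum_comm]
    have hinner : ∀ j ∈ range e, (∑ i ∈ range e, ξ ^ (i * j) • (w ^ j) x)
        = (∑ i ∈ range e, (ξ ^ j) ^ i) • (w ^ j) x := by
      intro j _
      rw [Finset.sum_smul]
      refine Finset.sum_congr rfl fun i _ => ?_
      rw [← pow_mul, Nat.mul_comm]
    rw [Finset.sum_congr rfl hinner]
    rw [Finset.sum_eq_single_of_mem 0 (Finset.mem_range.mpr (by omega))]
    · simp only [pow_zero, one_pow, Finset.sum_const, Finset.card_range, nsmul_eq_mul,
        mul_one, Module.End.one_apply]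
      rw [smul_smul, inv_mul_cancel₀ he', one_smul]
    · intro j hj hj0
      have hjlt : j < e := Finset.mem_range.mp hj
      have hne : ξ ^ j ≠ 1 := by
        intro h
        have hz : ζ ^ j = 1 := by
          have := hmul
          have h2 : ζ ^ j * ξ ^ j = 1 := by rw [← mul_pow, hmul, one_pow]
          rwa [h, mul_one] at h2
        exact hζ.pow_ne_one_of_pos_of_lt hj0 hjlt hz
      have hgeom : (∑ i ∈ range e, (ξ ^ j) ^ i) = 0 := by
        have h3 := geom_sum_mul (ξ ^ j) e
        rw [pow_right_comm, hξe, one_pow, sub_self] at h3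
        rcases mul_eq_zero.mp h3 with h | h
        · exact h
        · exact absurd (sub_eq_zero.mp h) hne
      rw [hgeom, zero_smul]

lemma eigen_ortho {k : Type*} [Field k] {e : ℕ} {ζ : k} (hζ : IsPrimitiveRoot ζ e)
    {t : Type*} [AddCommGroup t] [Module k t]
    (w : t →ₗ[k] t) (B : t →ₗ[k] t →ₗ[k] k)
    (hBinv : ∀ x y, B (w x) (w y) = B x y) {a b : ℕ} (hab : ¬ e ∣ a + b)
    {x y : t} (hx : w x = ζ ^ a • x) (hy : w y = ζ ^ b • y) : B x y = 0 := by
  have h := hBinv x y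
  rw [hx, hy] at h
  simp only [map_smul, LinearMap.smul_apply, smul_eq_mul] at h
  have hne : ζ ^ (a + b) ≠ 1 := fun h1 => hab ((hζ.pow_eq_one_iff_dvd _).mp h1)
  have h2 : (ζ ^ (a + b) - 1) * B x y = 0 := by
    rw [sub_mul, one_mul, pow_add]
    linear_combination h
  rcases mul_eq_zero.mp h2 with h3 | h3
  · exact absurd (by linear_combination h3) hne
  · exact h3

lemma eigen_finrank_le {k : Type*} [Field k] {e : ℕ} (he : 1 ≤ e) (he' : (e : k) ≠ 0)
    {ζ : k} (hζ : IsPrimitiveRoot ζ e) {t : Type*} [AddCommGroup t] [Module k t]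
    [FiniteDimensional k t]
    (w : t →ₗ[k] t) (hw : w ^ e = 1) (B : t →ₗ[k] t →ₗ[k] k)
    (hBnondeg : ∀ x, (∀ y, B x y = 0) → x = 0)
    (hBinv : ∀ x y, B (w x) (w y) = B x y) (a b : Fin e) (hab : e ∣ (a : ℕ) + (b : ℕ)) :
    Module.finrank k (Module.End.eigenspace w (ζ ^ (a : ℕ)))
      ≤ Module.finrank k (Module.End.eigenspace w (ζ ^ (b : ℕ))) := by
  set Ea := Module.End.eigenspace w (ζ ^ (a : ℕ)) with hEa
  set Eb := Module.End.eigenspace w (ζ ^ (b : ℕ)) with hEb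
  have hL : ∃ L : Ea →ₗ[k] Module.Dual k Eb,
      ∀ (x : Ea) (y : Eb), L x y = B x.1 y.1 := by
    refine ⟨{ toFun := fun x => (B x.1).comp (Submodule.subtype Eb)
              map_add' := fun x y => by ext z; simp
              map_smul' := fun c x => by ext z; simp }, fun x y => rfl⟩
  obtain ⟨L, hLapp⟩ := hL
  have h0 : ∀ x : Ea, L x = 0 → x = 0 := by
    intro x hx0
    have hx1 : ∀ y : t, B x.1 y = 0 := by
      intro y
      obtain ⟨c, hc, hsum⟩ := eigen_decomp he he' hζ w hw y
      rw [← hsum, map_sum]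
      apply Finset.sum_eq_zero
      intro j _
      by_cases hj : e ∣ (a : ℕ) + (j : ℕ)
      · have hjb : ζ ^ (j : ℕ) = ζ ^ (b : ℕ) := by
          congr 1
          obtain ⟨p, hp⟩ := hj
          obtain ⟨q, hq⟩ := hab
          have ha' := a.isLt
          have hb' := b.isLt
          have hj' := j.isLt
          have hp2 : p < 2 := by
            by_contra hcon
            push_neg at hcon
            have : e * 2 ≤ e * p := Nat.mul_le_mul_left e hcon
            omega
          have hq2 : q < 2 := by
            by_contra hcon
            push_neg at hcon
            have : e * 2 ≤ e * q := Nat.mul_le_mul_left e hcon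
            omega
          interval_cases p <;> interval_cases q <;> omega
        have hcj : c j ∈ Eb := by
          rw [hEb]
          exact Module.End.mem_eigenspace_iff.mpr (by rw [hc j, hjb])
        have := LinearMap.ext_iff.mp hx0 ⟨c j, hcj⟩
        rw [LinearMap.zero_apply, hLapp] at this
        exact this
      · exact eigen_ortho hζ w B hBinv hj
          (Module.End.mem_eigenspace_iff.mp x.2) (hc j)
    have := hBnondeg x.1 hx1
    exact Subtype.ext this
  have hinj : Function.Injective L := by
    rw [← LinearMap.ker_eq_bot]
    rw [Submodule.eq_bot_iff]
    exact fun x hx => h0 x (LinearMap.mem_ker.mp hx)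
  calc Module.finrank k Ea ≤ Module.finrank k (Module.Dual k Eb) :=
        LinearMap.finrank_le_finrank_of_injective hinj
    _ = Module.finrank k Eb := Subspace.dual_finrank_eq

set_option maxHeartbeats 1000000 in
theorem twisted_fixed_module_codim
    (k : Type*) [Field k] (e : ℕ) (he : 1 ≤ e) (he' : (e : k) ≠ 0)
    (ζ : k) (hζ : IsPrimitiveRoot ζ e)
    (t : Type*) [AddCommGroup t] [Module k t] [FiniteDimensional k t]
    (w : t →ₗ[k] t) (hw : w ^ e = 1)
    (B : t →ₗ[k] t →ₗ[k] k)
    (hBsymm : ∀ x y, B x y = B y x)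
    (hBnondeg : ∀ x, (∀ y, B x y = 0) → x = 0)
    (hBinv : ∀ x y, B (w x) (w y) = B x y) :
    2 * Module.finrank k
        ((PowerSeries k ⊗[k] t) ⧸
          (Submodule.span (PowerSeries k)
              ((LinearMap.eqLocus (twistedSigma k ζ w) LinearMap.id :
                Submodule k (PowerSeries k ⊗[k] t)) : Set (PowerSeries k ⊗[k] t))).restrictScalars k)
      = e * (Module.finrank k t - Module.finrank k (LinearMap.eqLocus w LinearMap.id)) := by
  classical
  haveI : NeZero e := ⟨by omega⟩
  set σ := twistedSigma k ζ w with hσdef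
  set F : Submodule k (PowerSeries k ⊗[k] t) := LinearMap.eqLocus σ LinearMap.id with hFdef
  set E : Fin e → Submodule k t := fun i => Module.End.eigenspace w (ζ ^ (i : ℕ)) with hE
  -- the eigenspace decomposition
  have hind : iSupIndep E := by
    have hinj : Function.Injective (fun i : Fin e => ζ ^ (i : ℕ)) := by
      intro i j hij
      exact Fin.ext (hζ.pow_inj i.isLt j.isLt hij)
    exact (Module.End.eigenspaces_iSupIndep w).comp hinj
  have htop : ⨆ i, E i = ⊤ := by
    rw [eq_top_iff]
    intro y _
    obtain ⟨c, hc, hsum⟩ := eigen_decomp he he' hζ w hw y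
    rw [← hsum]
    exact Submodule.sum_mem _ fun j _ =>
      Submodule.mem_iSup_of_mem j (Module.End.mem_eigenspace_iff.mpr (hc j))
  have hInt : DirectSum.IsInternal E :=
    DirectSum.isInternal_submodule_of_iSupIndep_of_iSup_eq_top hind htop
  set d : Fin e → ℕ := fun i => Module.finrank k (E i) with hd
  set v : ∀ i, Module.Basis (Fin (d i)) k (E i) := fun i => Module.finBasis k (E i) with hv
  set b0 : Module.Basis (Σ i : Fin e, Fin (d i)) k t := hInt.collectedBasis v with hb0
  have hb0mem : ∀ α, b0 α ∈ E α.1 := fun α => hInt.collectedBasis_mem v α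
  have hwb0 : ∀ α, w (b0 α) = ζ ^ ((α.1 : ℕ)) • b0 α := fun α =>
    Module.End.mem_eigenspace_iff.mp (hb0mem α)
  set b : Module.Basis (Σ i : Fin e, Fin (d i)) (PowerSeries k) (PowerSeries k ⊗[k] t) :=
    Algebra.TensorProduct.basis (PowerSeries k) b0 with hb
  -- the "negation" involution on Fin e
  set ng : Fin e → Fin e := fun i => ⟨(e - (i : ℕ)) % e, Nat.mod_lt _ (by omega)⟩ with hng
  have hngval : ∀ i : Fin e, (ng i : ℕ) = (e - (i : ℕ)) % e := fun i => rfl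
  have hngval' : ∀ i : Fin e, (i : ℕ) ≠ 0 → (ng i : ℕ) = e - (i : ℕ) := by
    intro i hi
    rw [hngval]
    exact Nat.mod_eq_of_lt (by have := i.isLt; omega)
  have hngzero : ∀ i : Fin e, (i : ℕ) = 0 → (ng i : ℕ) = 0 := by
    intro i hi
    rw [hngval, hi, Nat.sub_zero, Nat.mod_self]
  have hng2 : ∀ i, ng (ng i) = i := by
    intro i
    apply Fin.ext
    by_cases hi : (i : ℕ) = 0
    · rw [hngval, hngzero i hi, hi, Nat.sub_zero, Nat.mod_self]
    · have hlt := i.isLt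
      rw [hngval, hngval' i hi, Nat.mod_eq_of_lt (by omega)]
      omega
  have hdvdng : ∀ i : Fin e, e ∣ (i : ℕ) + (ng i : ℕ) := by
    intro i
    by_cases hi : (i : ℕ) = 0
    · rw [hngzero i hi, hi]
      exact ⟨0, by omega⟩
    · rw [hngval' i hi]
      have := i.isLt
      exact ⟨1, by omega⟩
  set jv : (Σ i : Fin e, Fin (d i)) → ℕ := fun α => (ng α.1 : ℕ) with hjv
  have hjdvd : ∀ α, e ∣ (α.1 : ℕ) + jv α := fun α => hdvdng α.1
  have hjnd : ∀ (α) (m : ℕ), m < jv α → ¬ e ∣ ((α.1 : ℕ) + m) := by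
    intro α m hm hdvd
    have hi := α.1.isLt
    replace hm : m < (ng α.1 : ℕ) := hm
    by_cases h0 : (α.1 : ℕ) = 0
    · rw [hngzero _ h0] at hm
      omega
    · rw [hngval' _ h0] at hm
      obtain ⟨p, hp⟩ := hdvd
      have hp2 : p = 0 ∨ 1 ≤ p := by omega
      rcases hp2 with rfl | h1
      · omega
      · have : e ≤ e * p := Nat.le_mul_of_pos_right e (by omega)
        omega
  -- basic formulas for σ on the basis
  have hσb : ∀ (f : PowerSeries k) (α), σ (f ⊗ₜ[k] b0 α)
      = (ζ ^ (α.1 : ℕ) • PowerSeries.rescale ζ f) ⊗ₜ[k] b0 α := by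
    intro f α
    rw [hσdef]
    simp only [twistedSigma, TensorProduct.map_tmul]
    rw [hwb0 α, TensorProduct.tmul_smul, TensorProduct.smul_tmul']
    rfl
  have hbα : ∀ (f : PowerSeries k) (α), f • b α = f ⊗ₜ[k] b0 α := by
    intro f α
    rw [hb]
    exact Algebra.TensorProduct.basis_repr_symm_apply' b0 f α
  have hσsm : ∀ (f : PowerSeries k) (α),
      σ (f • b α) = (ζ ^ (α.1 : ℕ) • PowerSeries.rescale ζ f) • b α := by
    intro f α
    rw [hbα, hσb, ← hbα]
  have hrepr : ∀ (z : PowerSeries k ⊗[k] t) (α),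
      b.repr (σ z) α = ζ ^ (α.1 : ℕ) • PowerSeries.rescale ζ (b.repr z α) := by
    intro z α
    conv_lhs => rw [← b.sum_repr z]
    rw [map_sum σ, Finset.sum_congr rfl fun β _ => hσsm (b.repr z β) β]
    exact congrFun (b.repr_sum_self fun β => ζ ^ (β.1 : ℕ) • PowerSeries.rescale ζ (b.repr z β)) α
  -- characterization of the span of the fixed module
  have hFP : ∀ z ∈ F, ∀ α, (PowerSeries.X : PowerSeries k) ^ (jv α) ∣ b.repr z α := by
    intro z hz α
    have hz' : σ z = z := LinearMap.mem_eqLocus.mp hz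
    have h1 : ζ ^ (α.1 : ℕ) • PowerSeries.rescale ζ (b.repr z α) = b.repr z α := by
      rw [← hrepr z α, hz']
    rw [PowerSeries.X_pow_dvd_iff]
    intro m hm
    have h2 := congrArg (PowerSeries.coeff m) h1
    rw [map_smul, PowerSeries.coeff_rescale, smul_eq_mul] at h2
    have hne : ζ ^ ((α.1 : ℕ) + m) ≠ 1 := fun hone =>
      (hjnd α m hm) ((hζ.pow_eq_one_iff_dvd _).mp hone)
    have h3 : (ζ ^ ((α.1 : ℕ) + m) - 1) * PowerSeries.coeff m (b.repr z α) = 0 := by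
      rw [sub_mul, one_mul, pow_add]
      linear_combination h2
    rcases mul_eq_zero.mp h3 with h4 | h4
    · exact absurd (by linear_combination h4) hne
    · exact h4
  have hgenF : ∀ α, ((PowerSeries.X : PowerSeries k) ^ jv α) • b α ∈ F := by
    intro α
    refine LinearMap.mem_eqLocus.mpr ?_
    rw [LinearMap.id_apply, hσsm]
    have hres : PowerSeries.rescale ζ ((PowerSeries.X : PowerSeries k) ^ jv α)
        = ζ ^ (jv α) • ((PowerSeries.X : PowerSeries k) ^ jv α) := by
      ext n
      simp only [PowerSeries.coeff_rescale, map_smul, smul_eq_mul, PowerSeries.coeff_X_pow,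
        mul_ite, mul_one, mul_zero]
      split_ifs with h
      · rw [h]
      · rfl
    rw [hres, smul_smul, ← pow_add, (hζ.pow_eq_one_iff_dvd _).mpr (hjdvd α), one_smul]
  have hPmem : ∀ z : PowerSeries k ⊗[k] t,
      (∀ α, (PowerSeries.X : PowerSeries k) ^ (jv α) ∣ b.repr z α) →
      z ∈ Submodule.span (PowerSeries k) (F : Set (PowerSeries k ⊗[k] t)) := by
    intro z hPz
    rw [← b.sum_repr z]
    apply Submodule.sum_mem
    intro α _
    obtain ⟨g, hg⟩ := hPz α
    rw [hg, mul_comm ((PowerSeries.X : PowerSeries k) ^ jv α) g, mul_smul]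
    exact Submodule.smul_mem _ g (Submodule.subset_span (hgenF α))
  have hmemP : ∀ z ∈ Submodule.span (PowerSeries k) (F : Set (PowerSeries k ⊗[k] t)),
      ∀ α, (PowerSeries.X : PowerSeries k) ^ (jv α) ∣ b.repr z α := by
    intro z hz
    induction hz using Submodule.span_induction with
    | mem x hx => exact hFP x hx
    | zero => intro α; simp
    | add x y hx hy ihx ihy =>
        intro α
        rw [map_add, Finsupp.add_apply]
        exact dvd_add (ihx α) (ihy α)
    | smul r x hx ih =>
        intro α
        rw [map_smul, Finsupp.smul_apply, smul_eq_mul]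
        exact Dvd.dvd.mul_left (ih α) r
  -- the coefficient map
  haveI : LinearMap.CompatibleSMul (PowerSeries k ⊗[k] t) (PowerSeries k) k (PowerSeries k) :=
    LinearMap.IsScalarTower.compatibleSMul
  set Φ : (PowerSeries k ⊗[k] t) →ₗ[k] (∀ α : (Σ i : Fin e, Fin (d i)), Fin (jv α) → k) :=
    LinearMap.pi (fun α => LinearMap.pi (fun m =>
      (PowerSeries.coeff (m : ℕ)) ∘ₗ ((b.coord α).restrictScalars k))) with hΦ
  have hΦapp : ∀ z α (m : Fin (jv α)),
      Φ z α m = PowerSeries.coeff (m : ℕ) (b.repr z α) := by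
    intro z α m
    rw [hΦ]
    simp [Module.Basis.coord_apply]
  have hkerP : ∀ z, z ∈ LinearMap.ker Φ ↔
      ∀ α, (PowerSeries.X : PowerSeries k) ^ (jv α) ∣ b.repr z α := by
    intro z
    rw [LinearMap.mem_ker]
    constructor
    · intro h α
      rw [PowerSeries.X_pow_dvd_iff]
      intro m hm
      have := congrFun (congrFun h α) ⟨m, hm⟩
      rw [hΦapp] at this
      exact this
    · intro h
      funext α m
      rw [hΦapp]
      exact PowerSeries.X_pow_dvd_iff.mp (h α) (m : ℕ) m.isLt
  have hkerspan : (Submodule.span (PowerSeries k)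
      (F : Set (PowerSeries k ⊗[k] t))).restrictScalars k = LinearMap.ker Φ := by
    ext z
    rw [Submodule.restrictScalars_mem, hkerP]
    exact ⟨fun h => hmemP z h, fun h => hPmem z h⟩
  have hsurj : Function.Surjective Φ := by
    intro c
    refine ⟨∑ α, (PowerSeries.mk fun m => if h : m < jv α then c α ⟨m, h⟩ else 0) • b α, ?_⟩
    funext α m
    rw [hΦapp, congrFun (b.repr_sum_self _) α, PowerSeries.coeff_mk, dif_pos m.isLt]
  -- put it together
  have hequiv : ((PowerSeries k ⊗[k] t) ⧸ (Submodule.span (PowerSeries k)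
        (F : Set (PowerSeries k ⊗[k] t))).restrictScalars k)
      ≃ₗ[k] (∀ α : (Σ i : Fin e, Fin (d i)), Fin (jv α) → k) :=
    (Submodule.quotEquivOfEq _ _ hkerspan).trans (Φ.quotKerEquivOfSurjective hsurj)
  rw [LinearEquiv.finrank_eq hequiv]
  have hT : Module.finrank k (∀ α : (Σ i : Fin e, Fin (d i)), Fin (jv α) → k)
      = ∑ α : (Σ i : Fin e, Fin (d i)), jv α := by
    rw [Module.finrank_pi_fintype k]
    exact Finset.sum_congr rfl fun α _ => Module.finrank_fin_fun k
  rw [hT]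
  -- compute the sums
  have hsigma : ∑ α : (Σ i : Fin e, Fin (d i)), jv α = ∑ i : Fin e, d i * (ng i : ℕ) := by
    rw [← Finset.univ_sigma_univ, Finset.sum_sigma]
    refine Finset.sum_congr rfl fun i _ => ?_
    have hconst : ∀ m : Fin (d i), jv ⟨i, m⟩ = (ng i : ℕ) := fun m => rfl
    rw [Finset.sum_congr rfl fun m _ => hconst m, Finset.sum_const, Finset.card_univ,
      Fintype.card_fin, smul_eq_mul]
  rw [hsigma]
  have hrt : Module.finrank k t = ∑ i, d i := by
    rw [Module.finrank_eq_card_basis b0, Fintype.card_sigma]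
    simp
  have hE0 : LinearMap.eqLocus w LinearMap.id = E 0 := by
    ext x
    rw [LinearMap.mem_eqLocus, hE]
    simp only [LinearMap.id_apply]
    rw [show ((0 : Fin e) : ℕ) = 0 from rfl, pow_zero]
    rw [Module.End.mem_eigenspace_iff, one_smul]
  have hrE0 : Module.finrank k (LinearMap.eqLocus w LinearMap.id) = d 0 := by
    rw [hE0, hd]
  rw [hrt, hrE0]
  -- dimension symmetry
  have hdsym : ∀ i, d (ng i) = d i := by
    intro i
    apply le_antisymm
    · have h1 : e ∣ ((ng i : ℕ) + ((ng (ng i)) : ℕ)) := hdvdng (ng i)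
      rw [hng2 i] at h1
      exact eigen_finrank_le he he' hζ w hw B hBnondeg hBinv (ng i) i h1
    · exact eigen_finrank_le he he' hζ w hw B hBnondeg hBinv i (ng i) (hdvdng i)
  -- final arithmetic
  have hswap : ∑ i : Fin e, d i * (i : ℕ) = ∑ i : Fin e, d i * (ng i : ℕ) := by
    have := Equiv.sum_comp (Function.Involutive.toPerm ng hng2)
      (fun i : Fin e => d i * (ng i : ℕ))
    calc ∑ i : Fin e, d i * (i : ℕ)
        = ∑ i : Fin e, d (ng i) * ((ng (ng i)) : ℕ) := by
          refine Finset.sum_congr rfl fun i _ => ?_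
          rw [hdsym, hng2]
      _ = ∑ i : Fin e, d i * (ng i : ℕ) := this
  have hsum_if : ∀ i : Fin e, (i : ℕ) + (ng i : ℕ) = if (i : ℕ) = 0 then 0 else e := by
    intro i
    by_cases hi : (i : ℕ) = 0
    · rw [if_pos hi, hi, hngzero i hi]
    · rw [if_neg hi, hngval' i hi]
      have := i.isLt
      omega
  have h2sum : 2 * ∑ i : Fin e, d i * (ng i : ℕ)
      = ∑ i : Fin e, d i * (if (i : ℕ) = 0 then 0 else e) := by
    rw [two_mul]
    nth_rewrite 1 [← hswap]
    rw [← Finset.sum_add_distrib]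
    refine Finset.sum_congr rfl fun i _ => ?_
    rw [← Nat.mul_add, hsum_if]
  rw [h2sum]
  rw [← Finset.add_sum_erase _ _ (Finset.mem_univ (0 : Fin e)),
    ← Finset.add_sum_erase _ d (Finset.mem_univ (0 : Fin e))]
  rw [show ((0 : Fin e) : ℕ) = 0 from rfl]
  rw [if_pos rfl, Nat.mul_zero, Nat.zero_add, Nat.add_sub_cancel_left, Finset.mul_sum]
  refine Finset.sum_congr rfl fun i hi => ?_
  have hi0 : (i : ℕ) ≠ 0 := fun hv => Finset.ne_of_mem_erase hi (Fin.ext (by simp [hv]))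
  rw [if_neg hi0, Nat.mul_comm]
end
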